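/- Universal property of the Zariski lattice: for any commutative ring R, any distributive lattice L, and any support d : R → L (i.e., d(1) = ⊤, d(0) = ⊥, d(fg) = d(f) ∧ d(g), d(f+g) ≤ d(f) ∨ d(g)), there is a unique lattice homomorphism φ : 𝓛_R → L with φ ∘ D = d; concretely φ(√(f₁,…,fₙ)) = d(f₁) ∨ … ∨ d(fₙ). -/

import Mathlib

open Pointwise

/-- The Zariski lattice: radicals of finitely generated ideals of `R`. -/
def ZariskiLat (R : Type*) [CommRing R] :=
  { I : Ideal R // ∃ s : Finset R, I = (Ideal.span (s : Set R)).radical }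

variable {R : Type*} [CommRing R]

/-- Join: `√a ∨ √b = √(a + b)`. -/
noncomputable def ZariskiLat.sup (a b : ZariskiLat R) : ZariskiLat R :=
  ⟨(a.1 ⊔ b.1).radical, by
    classical
    obtain ⟨s, hs⟩ := a.2
    obtain ⟨t, ht⟩ := b.2
    exact ⟨s ∪ t, by
      rw [hs, ht, ← Ideal.radical_sup, Finset.coe_union, Ideal.span_union]⟩⟩

/-- Meet: `√a ∧ √b = √(a·b)`. -/
noncomputable def ZariskiLat.inf (a b : ZariskiLat R) : ZariskiLat R :=
  ⟨(a.1 * b.1).radical, by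
    classical
    obtain ⟨s, hs⟩ := a.2
    obtain ⟨t, ht⟩ := b.2
    exact ⟨s * t, by
      rw [hs, ht, Ideal.radical_mul, Finset.coe_mul, ← Ideal.span_mul_span',
        Ideal.radical_mul, Ideal.radical_idem, Ideal.radical_idem]⟩⟩

/-- Top: `√(1) = ⊤`. -/
def ZariskiLat.top (R : Type*) [CommRing R] : ZariskiLat R :=
  ⟨⊤, ⟨{1}, by simp [Ideal.span_singleton_one, Ideal.radical_top]⟩⟩

/-- Bottom: `√(0)`. -/
def ZariskiLat.bot (R : Type*) [CommRing R] : ZariskiLat R :=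
  ⟨(⊥ : Ideal R).radical, ⟨∅, by simp⟩⟩

/-- The basic open `D(f) = √(f)`. -/
def ZariskiLat.D (f : R) : ZariskiLat R :=
  ⟨(Ideal.span {f}).radical, ⟨{f}, by simp⟩⟩

/-- `φ : 𝓛_R → L` is a lattice homomorphism commuting with the supports. -/
def ZariskiLat.IsHomOver {L : Type*} [DistribLattice L] [BoundedOrder L]
    (d : R → L) (φ : ZariskiLat R → L) : Prop :=
  (∀ a b : ZariskiLat R, φ (ZariskiLat.sup a b) = φ a ⊔ φ b) ∧
  (∀ a b : ZariskiLat R, φ (ZariskiLat.inf a b) = φ a ⊓ φ b) ∧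
  φ (ZariskiLat.top R) = ⊤ ∧ φ (ZariskiLat.bot R) = ⊥ ∧
  ∀ f : R, φ (ZariskiLat.D f) = d f

section Aux
variable {L : Type*} [DistribLattice L] [BoundedOrder L]
variable (d : R → L) (h0 : d 0 = ⊥) (hmul : ∀ f g : R, d (f * g) = d f ⊓ d g)
    (hadd : ∀ f g : R, d (f + g) ≤ d f ⊔ d g)

include h0 hmul hadd in
lemma ZL.aux_span (s : Finset R) : ∀ f ∈ Ideal.span (s : Set R), d f ≤ s.sup d := by
  intro f hf
  induction hf using Submodule.span_induction with
  | mem x hx => exact Finset.le_sup (by simpa using hx)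
  | zero => simp [h0]
  | add x y _ _ hx hy => exact (hadd x y).trans (by simpa using sup_le_sup hx hy)
  | smul r x _ hx =>
      rw [smul_eq_mul, hmul]
      exact inf_le_right.trans hx

include hmul in
lemma ZL.dpow (f : R) (n : ℕ) : d (f ^ (n + 1)) = d f := by
  induction n with
  | zero => simp
  | succ m ih => rw [pow_succ, hmul, ih, inf_idem]

include h0 hmul hadd in
lemma ZL.aux_rad (s : Finset R) (f : R) (hf : f ∈ (Ideal.span (s : Set R)).radical) :
    d f ≤ s.sup d := by
  obtain ⟨n, hn⟩ := hf
  cases n with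
  | zero =>
      have h1 : (1 : R) ∈ Ideal.span (s : Set R) := by simpa using hn
      have : f ∈ Ideal.span (s : Set R) := by simpa using Ideal.mul_mem_left _ f h1
      exact ZL.aux_span d h0 hmul hadd s f this
  | succ m =>
      calc d f = d (f ^ (m + 1)) := (ZL.dpow d hmul f m).symm
        _ ≤ s.sup d := ZL.aux_span d h0 hmul hadd s _ hn

include h0 hmul hadd in
lemma ZL.wd (s t : Finset R)
    (h : (Ideal.span (s : Set R)).radical = (Ideal.span (t : Set R)).radical) :
    s.sup d = t.sup d := by
  have key : ∀ u v : Finset R,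
      (Ideal.span (u : Set R)).radical ≤ (Ideal.span (v : Set R)).radical →
        u.sup d ≤ v.sup d := by
    intro u v huv
    refine Finset.sup_le fun f hf => ZL.aux_rad d h0 hmul hadd v f (huv ?_)
    exact Ideal.le_radical (Ideal.subset_span (by simpa using hf))
  exact le_antisymm (key s t h.le) (key t s h.ge)

include hmul in
lemma ZL.sup_mul [DecidableEq R] (s t : Finset R) :
    (s * t).sup d = s.sup d ⊓ t.sup d := by
  classical
  apply le_antisymm
  · refine Finset.sup_le fun a ha => ?_
    obtain ⟨x, hx, y, hy, rfl⟩ := Finset.mem_mul.1 ha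
    rw [hmul]
    exact inf_le_inf (Finset.le_sup hx) (Finset.le_sup hy)
  · rw [Finset.sup_inf_distrib_right]
    refine Finset.sup_le fun x hx => ?_
    rw [Finset.sup_inf_distrib_left]
    refine Finset.sup_le fun y hy => ?_
    rw [← hmul]
    exact Finset.le_sup (Finset.mul_mem_mul hx hy)

/-- the canonical extension -/
noncomputable def ZL.phi (a : ZariskiLat R) : L := a.2.choose.sup d

include h0 hmul hadd in
lemma ZL.phi_eq (a : ZariskiLat R) (s : Finset R)
    (hs : a.1 = (Ideal.span (s : Set R)).radical) : ZL.phi d a = s.sup d := by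
  have h := a.2.choose_spec
  exact ZL.wd d h0 hmul hadd _ _ (h ▸ hs)

include h0 hmul hadd in
lemma ZL.hom_eval (φ : ZariskiLat R → L) (hφ : ZariskiLat.IsHomOver d φ) :
    ∀ s : Finset R, φ ⟨(Ideal.span (s : Set R)).radical, ⟨s, rfl⟩⟩ = s.sup d := by
  classical
  obtain ⟨hsup, hinf, htop, hbot, hD⟩ := hφ
  intro s
  induction s using Finset.induction_on with
  | empty =>
      have : (⟨(Ideal.span ((∅ : Finset R) : Set R)).radical, ⟨∅, rfl⟩⟩ : ZariskiLat R)
          = ZariskiLat.bot R := Subtype.ext (by simp [ZariskiLat.bot])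
      rw [this, hbot]; simp
  | @insert f s hf ih =>
      have key : (⟨(Ideal.span ((insert f s : Finset R) : Set R)).radical,
          ⟨insert f s, rfl⟩⟩ : ZariskiLat R)
          = ZariskiLat.sup (ZariskiLat.D f) ⟨(Ideal.span (s : Set R)).radical, ⟨s, rfl⟩⟩ := by
        apply Subtype.ext
        show (Ideal.span ((insert f s : Finset R) : Set R)).radical
            = ((Ideal.span {f}).radical ⊔ (Ideal.span (s : Set R)).radical).radical
        rw [← Ideal.radical_sup, Finset.coe_insert, Ideal.span_insert]
      rw [key]
      exact (hsup _ _).trans ((congrArg₂ (· ⊔ ·) (hD f) ih).trans Finset.sup_insert.symm)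

end Aux

/-- Universal property of the Zariski lattice: every support `d : R → L` factors
uniquely through `D : R → 𝓛_R` via a lattice homomorphism, which is concretely given
by `φ(√(f₁,…,fₙ)) = d(f₁) ∨ … ∨ d(fₙ)`. -/
theorem zariskiLat_universal_property {L : Type*} [DistribLattice L] [BoundedOrder L]
    (d : R → L) (h1 : d 1 = ⊤) (h0 : d 0 = ⊥)
    (hmul : ∀ f g : R, d (f * g) = d f ⊓ d g)
    (hadd : ∀ f g : R, d (f + g) ≤ d f ⊔ d g) :
    (∃! φ : ZariskiLat R → L, ZariskiLat.IsHomOver d φ) ∧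
    ∀ φ : ZariskiLat R → L, ZariskiLat.IsHomOver d φ →
      ∀ s : Finset R, φ ⟨(Ideal.span (s : Set R)).radical, ⟨s, rfl⟩⟩ = s.sup d := by
  classical
  have peq := ZL.phi_eq d h0 hmul hadd
  refine ⟨⟨ZL.phi d, ⟨?_, ?_, ?_, ?_, ?_⟩, ?_⟩, fun φ hφ => ZL.hom_eval d h0 hmul hadd φ hφ⟩
  · intro a b
    obtain ⟨s, hs⟩ := a.2
    obtain ⟨t, ht⟩ := b.2
    rw [peq a s hs, peq b t ht, peq (ZariskiLat.sup a b) (s ∪ t) (by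
      show (a.1 ⊔ b.1).radical = _
      rw [hs, ht, ← Ideal.radical_sup, Finset.coe_union, Ideal.span_union]),
      Finset.sup_union]
  · intro a b
    obtain ⟨s, hs⟩ := a.2
    obtain ⟨t, ht⟩ := b.2
    rw [peq a s hs, peq b t ht, peq (ZariskiLat.inf a b) (s * t) (by
      show (a.1 * b.1).radical = _
      rw [hs, ht, Ideal.radical_mul, Finset.coe_mul, ← Ideal.span_mul_span',
        Ideal.radical_mul, Ideal.radical_idem, Ideal.radical_idem]),
      ZL.sup_mul d hmul]
  · rw [peq (ZariskiLat.top R) {1} (by simp [ZariskiLat.top, Ideal.span_singleton_one, Ideal.radical_top])]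
    simp [h1]
  · rw [peq (ZariskiLat.bot R) ∅ (by simp [ZariskiLat.bot])]
    simp
  · intro f
    rw [peq (ZariskiLat.D f) {f} (by simp [ZariskiLat.D])]
    simp
  · intro ψ hψ
    funext a
    obtain ⟨s, hs⟩ := a.2
    have ha : a = ⟨(Ideal.span (s : Set R)).radical, ⟨s, rfl⟩⟩ := Subtype.ext hs
    rw [ha, ZL.hom_eval d h0 hmul hadd ψ hψ s]
    exact (peq ⟨(Ideal.span (s : Set R)).radical, ⟨s, rfl⟩⟩ s rfl).symm
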